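/- Let p₁, p₂, p₃, p₄ ∈ ℝ² be such that for i = 1, 2, 3 the segment p_{i+1} − p_i satisfies |(p_{i+1} − p_i)_y| ≤ (p_{i+1} − p_i)_x. Then d(p₁,p₃) + d(p₂,p₄) ≥ d(p₁,p₂) + d(p₃,p₄), where d denotes Euclidean distance. -/

import Mathlib

lemma cone_norm_le_add (a b : EuclideanSpace ℝ (Fin 2))
    (ha : |a 1| ≤ a 0) (hb : |b 1| ≤ b 0) : ‖a‖ ≤ ‖a + b‖ := by
  have hinner : (0:ℝ) ≤ inner ℝ a b := by
    rw [PiLp.inner_apply, Fin.sum_univ_two]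
    simp only [RCLike.inner_apply, starRingEnd_apply, star_trivial]
    nlinarith [abs_nonneg (a 1), abs_nonneg (b 1), le_abs_self (a 1 * b 1),
      neg_abs_le (a 1 * b 1), abs_mul (a 1) (b 1),
      mul_le_mul ha hb (abs_nonneg (b 1)) ((abs_nonneg (a 1)).trans ha)]
  have h2 : ‖a‖^2 ≤ ‖a + b‖^2 := by
    rw [norm_add_sq_real]
    nlinarith [sq_nonneg ‖b‖]
  have := norm_nonneg (a + b)
  nlinarith [norm_nonneg a]

/-- If `p₁,p₂,p₃,p₄ ∈ ℝ²` are such that each consecutive segment `p_{i+1} - p_i` satisfies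
`|(p_{i+1}-p_i)_y| ≤ (p_{i+1}-p_i)_x`, then
`d(p₁,p₃) + d(p₂,p₄) ≥ d(p₁,p₂) + d(p₃,p₄)`. -/
theorem stmt15 (p : Fin 4 → EuclideanSpace ℝ (Fin 2))
    (h : ∀ i : Fin 3, |(p i.succ - p i.castSucc) 1| ≤ (p i.succ - p i.castSucc) 0) :
    dist (p 0) (p 1) + dist (p 2) (p 3) ≤ dist (p 0) (p 2) + dist (p 1) (p 3) := by
  have h0 := h 0
  have h1 := h 1
  have h2 := h 2
  have e0 : (0:Fin 3).succ = (1:Fin 4) := rfl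
  have e0' : (0:Fin 3).castSucc = (0:Fin 4) := rfl
  have e1 : (1:Fin 3).succ = (2:Fin 4) := rfl
  have e1' : (1:Fin 3).castSucc = (1:Fin 4) := rfl
  have e2 : (2:Fin 3).succ = (3:Fin 4) := rfl
  have e2' : (2:Fin 3).castSucc = (2:Fin 4) := rfl
  rw [e0, e0'] at h0
  rw [e1, e1'] at h1
  rw [e2, e2'] at h2
  have A : dist (p 0) (p 1) ≤ dist (p 0) (p 2) := by
    have := cone_norm_le_add (p 1 - p 0) (p 2 - p 1) h0 h1
    have eq1 : (p 1 - p 0) + (p 2 - p 1) = p 2 - p 0 := by abel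
    rw [eq1] at this
    rw [dist_eq_norm, dist_eq_norm, norm_sub_rev (p 0) (p 1), norm_sub_rev (p 0) (p 2)]
    exact this
  have B : dist (p 2) (p 3) ≤ dist (p 1) (p 3) := by
    have := cone_norm_le_add (p 3 - p 2) (p 2 - p 1) h2 h1
    have eq1 : (p 3 - p 2) + (p 2 - p 1) = p 3 - p 1 := by abel
    rw [eq1] at this
    rw [dist_eq_norm, dist_eq_norm, norm_sub_rev (p 2) (p 3), norm_sub_rev (p 1) (p 3)]
    exact this
  linarith
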